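/- Let x ∈ ℂ^N and w ∈ ℂ^W with step size 0 < L < W, let η_1, η_2 ∈ ℂ with |η_1| = |η_2| = 1, and let λ = (λ_0,…,λ_{L−1}) be nonzero complex numbers. Define (x',w') by x'[n] = η_1·η_2^n·λ_{n mod L}·x[n] for 0 ≤ n ≤ N−1 and w'[n] = η_2^n·λ_{(L−n) mod L}^{−1}·w[n] for 0 ≤ n ≤ W−1. Then the blind STFT of (x',w') satisfies ŷ'[k,m] = η_1·η_2^{mL}·ŷ[k,m] for every integer k and every m = 0,…,M−1; in particular |ŷ'[k,m]| = |ŷ[k,m]| for all k and m. -/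

import Mathlib

open Complex BigOperators

/-- Extension of a finite vector `w ∈ ℂ^W` to `ℤ` by zero outside `{0,…,W−1}`. -/
noncomputable def zext {W : ℕ} (w : Fin W → ℂ) (j : ℤ) : ℂ :=
  if h : 0 ≤ j ∧ j < (W : ℤ) then w ⟨j.toNat, by omega⟩ else 0

/-- The blind short-time Fourier transform
`ŷ[k,m] = Σ_{n=0}^{N−1} x[n]·w[mL−n]·e^{−2πikn/N}`. -/
noncomputable def stft {N W : ℕ} (x : Fin N → ℂ) (w : Fin W → ℂ)
    (L : ℕ) (k : ℤ) (m : ℕ) : ℂ :=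
  ∑ n : Fin N, x n * zext w ((m : ℤ) * L - (n : ℕ)) *
    Complex.exp (-(2 * (Real.pi : ℂ) * Complex.I * (k : ℂ) * ((n : ℕ) : ℂ)) / (N : ℂ))

/-- the action `x'[n] = η₁·η₂ⁿ·λ_{n mod L}·x[n]`,
`w'[n] = η₂ⁿ·λ_{(L−n) mod L}⁻¹·w[n]` sends `ŷ[k,m]` to `η₁·η₂^{mL}·ŷ[k,m]`;
in particular it preserves the phaseless blind STFT measurements. -/
theorem blind_stft_phaseless_ambiguity
    {N W L : ℕ} (hL : 0 < L) (hLW : L < W)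
    (x x' : Fin N → ℂ) (w w' : Fin W → ℂ)
    (η₁ η₂ : ℂ) (hη₁ : ‖η₁‖ = 1) (hη₂ : ‖η₂‖ = 1)
    (lam : Fin L → ℂ) (hlam : ∀ j, lam j ≠ 0)
    (hx' : ∀ n : Fin N, x' n = η₁ * η₂ ^ (n : ℕ) * lam ⟨(n : ℕ) % L, Nat.mod_lt _ hL⟩ * x n)
    (hw' : ∀ n : Fin W, w' n = η₂ ^ (n : ℕ) *
      (lam ⟨(L - (n : ℕ) % L) % L, Nat.mod_lt _ hL⟩)⁻¹ * w n)
    (k : ℤ) (m : ℕ) (hm : m < (N + W - 1 + L - 1) / L) :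
    stft x' w' L k m = η₁ * η₂ ^ (m * L) * stft x w L k m ∧
    ‖stft x' w' L k m‖ = ‖stft x w L k m‖ := by
  have key : stft x' w' L k m = η₁ * η₂ ^ (m * L) * stft x w L k m := by
    unfold stft
    rw [Finset.mul_sum]
    apply Finset.sum_congr rfl
    intro n _
    have hmain : x' n * zext w' ((m : ℤ) * L - (n : ℕ)) =
        η₁ * η₂ ^ (m * L) * (x n * zext w ((m : ℤ) * L - (n : ℕ))) := by
      unfold zext
      by_cases h : 0 ≤ (m : ℤ) * L - (n : ℕ) ∧ (m : ℤ) * L - (n : ℕ) < (W : ℤ)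
      · rw [dif_pos h, dif_pos h]
        have h1 := h.1
        have hjn : (n : ℕ) + ((m : ℤ) * L - (n : ℕ)).toNat = m * L := by omega
        set j : ℕ := ((m : ℤ) * L - (n : ℕ)).toNat with hjdef
        have hmod : ((n : ℕ) % L + j % L) % L = 0 := by
          rw [← Nat.add_mod, hjn, Nat.mul_mod_left]
        have ha : (n : ℕ) % L < L := Nat.mod_lt _ hL
        have hc : j % L < L := Nat.mod_lt _ hL
        have hac : (n : ℕ) % L + j % L = 0 ∨ (n : ℕ) % L + j % L = L := by
          by_cases hlt : (n : ℕ) % L + j % L < L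
          · left; rwa [Nat.mod_eq_of_lt hlt] at hmod
          · right
            rw [Nat.mod_eq_sub_mod (by omega), Nat.mod_eq_of_lt (by omega)] at hmod
            omega
        have hidx : (L - j % L) % L = (n : ℕ) % L := by
          rcases hac with hac | hac
          · have h0 : j % L = 0 := by omega
            have h0' : (n : ℕ) % L = 0 := by omega
            simp [h0, h0']
          · have : L - j % L = (n : ℕ) % L := by omega
            rw [this, Nat.mod_eq_of_lt ha]
        rw [hx' n, hw' ⟨j, by omega⟩]
        simp only [hidx]
        have hpow : η₂ ^ (m * L) = η₂ ^ ((n : ℕ)) * η₂ ^ j := by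
          rw [← pow_add, hjn]
        rw [hpow]
        have hne := hlam ⟨(n : ℕ) % L, Nat.mod_lt _ hL⟩
        field_simp
        have h3 : ((m : ℤ) * L).toNat - (n : ℕ) = j := by omega
        rfl
      · rw [dif_neg h, dif_neg h]
        ring
    rw [hmain]; ring
  refine ⟨key, ?_⟩
  rw [key]
  simp [map_mul, map_pow, hη₁, hη₂]
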